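/- Define a_n = sum over triples (p,q,r) of non-negative integers with p+q+r=n of (n!/(p!q!r!))^2. Then for all n ≥ 2, n^2 * a_n - (10n^2 - 10n + 3)*a_{n-1} + 9*(n-1)^2*a_{n-2} = 0. -/

import Mathlib

open Finset

private def gg (n k : ℕ) : ℤ := ((n.choose k : ℕ) : ℤ) ^ 2 * (((2 * k).choose k : ℕ) : ℤ)

private def GG (m k : ℕ) : ℤ :=
  (k : ℤ) * (3 * (k : ℤ) - 4 * ((m : ℤ) + 2)) * (((m + 1).choose (k - 1) : ℕ) : ℤ) ^ 2 *
    (((2 * k).choose k : ℕ) : ℤ)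

private lemma tri (p q r : ℕ) :
    Nat.multinomial Finset.univ ![p, q, r] = (p + (q + r)).choose p * ((q + r).choose q) := by
  have h : (Finset.univ : Finset (Fin 3)) = {0, 1, 2} := by decide
  rw [h, Nat.multinomial_insert (by decide), Nat.multinomial_insert (by decide),
    Nat.multinomial_singleton]
  simp [Finset.sum_insert, Finset.sum_singleton]

private lemma vdm (s : ℕ) :
    ∑ y ∈ Finset.HasAntidiagonal.antidiagonal s, ((s.choose y.1 : ℕ) : ℤ) ^ 2 = (((2 * s).choose s : ℕ) : ℤ) := by
  have h : (s + s).choose s = ∑ ij ∈ Finset.HasAntidiagonal.antidiagonal s, s.choose ij.1 * s.choose ij.2 :=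
    Nat.add_choose_eq s s s
  have h2 : ∀ ij ∈ Finset.HasAntidiagonal.antidiagonal s, s.choose ij.1 * s.choose ij.2
      = s.choose ij.1 * s.choose ij.1 := by
    rintro ⟨a, b⟩ hab
    have hab' : a + b = s := Finset.HasAntidiagonal.mem_antidiagonal.mp hab
    have hb : b = s - a := by omega
    rw [hb, Nat.choose_symm (by omega)]
  rw [Finset.sum_congr rfl h2] at h
  have h3 : (((2 * s).choose s : ℕ) : ℤ)
      = ((∑ ij ∈ Finset.HasAntidiagonal.antidiagonal s, s.choose ij.1 * s.choose ij.1 : ℕ) : ℤ) := by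
    rw [two_mul, h]
  rw [h3]
  push_cast
  exact Finset.sum_congr rfl fun y _ => by ring

private lemma fA (f : ℕ → ℤ)
    (hf : ∀ n : ℕ, f n = ∑ x ∈ Finset.HasAntidiagonal.antidiagonal n, ∑ y ∈ Finset.HasAntidiagonal.antidiagonal x.2,
      ((Nat.multinomial Finset.univ ![x.1, y.1, y.2] : ℤ)) ^ 2) (n : ℕ) :
    f n = ∑ k ∈ Finset.range (n + 1), gg n k := by
  rw [hf n]
  have h1 : ∀ x ∈ Finset.HasAntidiagonal.antidiagonal n, (∑ y ∈ Finset.HasAntidiagonal.antidiagonal x.2,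
      ((Nat.multinomial Finset.univ ![x.1, y.1, y.2] : ℤ)) ^ 2)
      = ((n.choose x.1 : ℕ) : ℤ) ^ 2 * (((2 * x.2).choose x.2 : ℕ) : ℤ) := by
    rintro ⟨p, s⟩ hx
    have hps : p + s = n := Finset.HasAntidiagonal.mem_antidiagonal.mp hx
    have h2 : ∀ y ∈ Finset.HasAntidiagonal.antidiagonal s, ((Nat.multinomial Finset.univ ![p, y.1, y.2] : ℤ)) ^ 2
        = ((n.choose p : ℕ) : ℤ) ^ 2 * ((s.choose y.1 : ℕ) : ℤ) ^ 2 := by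
      rintro ⟨q, r⟩ hy
      have hqr : q + r = s := Finset.HasAntidiagonal.mem_antidiagonal.mp hy
      rw [tri p q r, hqr, hps]
      push_cast
      ring
    rw [Finset.sum_congr rfl h2, ← Finset.mul_sum, vdm s]
  rw [Finset.sum_congr rfl h1, Finset.Nat.sum_antidiagonal_eq_sum_range_succ_mk,
    ← Finset.sum_range_reflect]
  apply Finset.sum_congr rfl
  intro k hk
  have hk' : k ≤ n := by
    have := Finset.mem_range.mp hk; omega
  simp only [gg]
  rw [show n + 1 - 1 - k = n - k from by omega, show n - (n - k) = k from by omega,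
    Nat.choose_symm hk']

private lemma key (m k : ℕ) :
    ((m : ℤ) + 2) ^ 2 * gg (m + 2) k
      - (10 * ((m : ℤ) + 2) ^ 2 - 10 * ((m : ℤ) + 2) + 3) * gg (m + 1) k
      + 9 * ((m : ℤ) + 1) ^ 2 * gg m k = GG m (k + 1) - GG m k := by
  rcases k with _ | k
  · norm_num [gg, GG]
    ring
  · by_cases hk : k ≤ m
    · -- generic case, j = k+1 ≤ m+1
      have hA := Nat.choose_mul_succ_eq (m + 1) (k + 1)
      have hC := Nat.choose_mul_succ_eq m (k + 1)
      have hD := Nat.choose_succ_right_eq (m + 1) k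
      have hT : (k + 2) * ((2 * (k + 2)).choose (k + 2))
          = 2 * (2 * (k + 1) + 1) * ((2 * (k + 1)).choose (k + 1)) :=
        Nat.succ_mul_centralBinom_succ (k + 1)
      set A : ℤ := (((m + 2).choose (k + 1) : ℕ) : ℤ) with hAdef
      set B : ℤ := (((m + 1).choose (k + 1) : ℕ) : ℤ) with hBdef
      set Cc : ℤ := ((m.choose (k + 1) : ℕ) : ℤ) with hCdef
      set D : ℤ := (((m + 1).choose k : ℕ) : ℤ) with hDdef
      set T : ℤ := (((2 * (k + 1)).choose (k + 1) : ℕ) : ℤ) with hTdef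
      set T' : ℤ := (((2 * (k + 2)).choose (k + 2) : ℕ) : ℤ) with hT'def
      have r1 : B * ((m : ℤ) + 2) = A * ((m : ℤ) + 1 - k) := by
        have h := hA
        zify [show k + 1 ≤ m + 1 + 1 by omega] at h
        rw [hAdef, hBdef]
        push_cast
        linear_combination h
      have r2 : Cc * ((m : ℤ) + 1) = B * ((m : ℤ) - k) := by
        have h := hC
        zify [show k + 1 ≤ m + 1 by omega] at h
        rw [hBdef, hCdef]
        push_cast
        linear_combination h
      have r3 : B * ((k : ℤ) + 1) = D * ((m : ℤ) + 1 - k) := by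
        have h := hD
        zify [show k ≤ m + 1 by omega] at h
        rw [hBdef, hDdef]
        push_cast
        linear_combination h
      have r4 : ((k : ℤ) + 2) * T' = 2 * (2 * (k : ℤ) + 3) * T := by
        have h := hT
        zify at h
        rw [hTdef, hT'def]
        push_cast
        linear_combination h
      have e1 : (B * ((m : ℤ) + 2)) ^ 2 = (A * ((m : ℤ) + 1 - k)) ^ 2 := by rw [r1]
      have e2 : (Cc * ((m : ℤ) + 1)) ^ 2 = (B * ((m : ℤ) - k)) ^ 2 := by rw [r2]
      have e3 : (B * ((k : ℤ) + 1)) ^ 2 = (D * ((m : ℤ) + 1 - k)) ^ 2 := by rw [r3]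
      have hu : (0 : ℤ) < (m : ℤ) + 1 - k := by
        have : (k : ℤ) ≤ m := by exact_mod_cast hk
        linarith
      have hM : ((k : ℤ) + 2) * ((m : ℤ) + 1 - k) ^ 2 * ((m : ℤ) + 1) ^ 2 ≠ 0 := by
        positivity
      apply mul_left_cancel₀ hM
      simp only [gg, GG, Nat.add_sub_cancel]
      push_cast
      rw [show k + 1 + 1 = k + 2 from rfl]
      rw [← hAdef, ← hBdef, ← hCdef, ← hDdef, ← hTdef, ← hT'def]
      linear_combination
        (-(((m : ℤ) + 2) ^ 2 * T * ((k : ℤ) + 2) * ((m : ℤ) + 1) ^ 2)) * e1 +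
        (9 * T * ((k : ℤ) + 2) * ((m : ℤ) + 1 - k) ^ 2 * ((m : ℤ) + 1) ^ 2) * e2 +
        (-((k : ℤ) + 1) * (3 * ((k : ℤ) + 1) - 4 * ((m : ℤ) + 2)) * T * ((k : ℤ) + 2) *
          ((m : ℤ) + 1) ^ 2) * e3 +
        (-((k : ℤ) + 2) * ((m : ℤ) + 1 - k) ^ 2 * ((m : ℤ) + 1) ^ 2 *
          (3 * (k : ℤ) + 6 - 4 * ((m : ℤ) + 2)) * B ^ 2) * r4
    · by_cases hk2 : k = m + 1
      · subst hk2
        have hz : m.choose (m + 1 + 1) = 0 := Nat.choose_eq_zero_of_lt (by omega)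
        simp only [gg, GG, Nat.add_sub_cancel, Nat.choose_self, Nat.choose_succ_self, hz]
        push_cast
        ring
      · -- k+1 ≥ m+3
        have h1 : (m + 2).choose (k + 1) = 0 := Nat.choose_eq_zero_of_lt (by omega)
        have h2 : (m + 1).choose (k + 1) = 0 := Nat.choose_eq_zero_of_lt (by omega)
        have h3 : m.choose (k + 1) = 0 := Nat.choose_eq_zero_of_lt (by omega)
        have h4 : (m + 1).choose k = 0 := Nat.choose_eq_zero_of_lt (by omega)
        simp only [gg, GG, Nat.add_sub_cancel, h1, h2, h3, h4]
        push_cast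
        ring

private lemma sumkey (m : ℕ) :
    ∑ k ∈ Finset.range (m + 3),
      (((m : ℤ) + 2) ^ 2 * gg (m + 2) k
        - (10 * ((m : ℤ) + 2) ^ 2 - 10 * ((m : ℤ) + 2) + 3) * gg (m + 1) k
        + 9 * ((m : ℤ) + 1) ^ 2 * gg m k) = 0 := by
  have h : ∑ k ∈ Finset.range (m + 3),
      (((m : ℤ) + 2) ^ 2 * gg (m + 2) k
        - (10 * ((m : ℤ) + 2) ^ 2 - 10 * ((m : ℤ) + 2) + 3) * gg (m + 1) k
        + 9 * ((m : ℤ) + 1) ^ 2 * gg m k)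
      = ∑ k ∈ Finset.range (m + 3), (GG m (k + 1) - GG m k) :=
    Finset.sum_congr rfl fun k _ => key m k
  rw [h, Finset.sum_range_sub]
  have h0 : GG m 0 = 0 := by simp [GG]
  have h1 : GG m (m + 3) = 0 := by
    simp only [GG, Nat.add_sub_cancel]
    rw [Nat.choose_eq_zero_of_lt (show m + 1 < m + 3 - 1 by omega)]
    push_cast
    ring
  rw [h0, h1]
  ring

theorem recurrence_N3_ones (f : ℕ → ℤ)
    (hf : ∀ n : ℕ, f n = ∑ x ∈ Finset.HasAntidiagonal.antidiagonal n, ∑ y ∈ Finset.HasAntidiagonal.antidiagonal x.2,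
      ((Nat.multinomial Finset.univ ![x.1, y.1, y.2] : ℤ)) ^ 2) :
    ∀ n : ℕ, 2 ≤ n →
      (n : ℤ) ^ 2 * f n - (10 * (n : ℤ) ^ 2 - 10 * (n : ℤ) + 3) * f (n - 1)
        + 9 * ((n : ℤ) - 1) ^ 2 * f (n - 2) = 0 := by
  intro n hn
  obtain ⟨m, rfl⟩ : ∃ m, n = m + 2 := ⟨n - 2, by omega⟩
  have e1 : m + 2 - 1 = m + 1 := by omega
  have e2 : m + 2 - 2 = m := by omega
  rw [e1, e2]
  have h1 : f (m + 2) = ∑ k ∈ Finset.range (m + 3), gg (m + 2) k := fA f hf (m + 2)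
  have h2 : f (m + 1) = ∑ k ∈ Finset.range (m + 3), gg (m + 1) k := by
    rw [fA f hf (m + 1)]
    symm
    rw [show m + 3 = (m + 2) + 1 from rfl, Finset.sum_range_succ]
    have : (m + 1).choose (m + 2) = 0 := Nat.choose_eq_zero_of_lt (by omega)
    simp [gg, this]
  have h3 : f m = ∑ k ∈ Finset.range (m + 3), gg m k := by
    rw [fA f hf m]
    symm
    rw [show m + 3 = (m + 2) + 1 from rfl, Finset.sum_range_succ,
      show m + 2 = (m + 1) + 1 from rfl, Finset.sum_range_succ]
    have t1 : m.choose (m + 1) = 0 := Nat.choose_eq_zero_of_lt (by omega)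
    have t2 : m.choose (m + 1 + 1) = 0 := Nat.choose_eq_zero_of_lt (by omega)
    simp [gg, t1, t2]
  rw [h1, h2, h3]
  have hs := sumkey m
  rw [Finset.sum_add_distrib, Finset.sum_sub_distrib, ← Finset.mul_sum, ← Finset.mul_sum,
    ← Finset.mul_sum] at hs
  push_cast
  linear_combination hs
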